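/- Let ρ be a d×d density matrix and let Φ₁,…,Φ_N (N ≥ 3) be quantum channels on d×d matrices, where Φ_s has Kraus operators K₁ˢ,…,K_nˢ. Then for any permutations π₁,…,π_N of {1,…,n}, ∑_{s=1}^{N} √(I_ρ(Φ_s)) ≥ (1/(N−2)) { ∑_{1≤s<t≤N} √( ∑_{i=1}^{n} I_ρ(K^s_{π_s(i)} + K^t_{π_t(i)}) ) − √( ∑_{i=1}^{n} I_ρ( ∑_{s=1}^{N} K^s_{π_s(i)} ) ) }. -/

import Mathlib

open Matrix Finset
open scoped ComplexOrder

/-- The positive semidefinite square root of a positive semidefinite matrix, as `Matrix.PosSemidef.sqrt`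
was defined in the older Mathlib. -/
noncomputable def posSemidefSqrt {d : ℕ} {ρ : Matrix (Fin d) (Fin d) ℂ} (hρ : ρ.PosSemidef) :
    Matrix (Fin d) (Fin d) ℂ :=
  hρ.1.eigenvectorUnitary.1 * diagonal ((↑) ∘ (√·) ∘ hρ.1.eigenvalues) *
  (star hρ.1.eigenvectorUnitary : Matrix (Fin d) (Fin d) ℂ)

/-- Wigner–Yanase skew information `I_ρ(A) = (1/2) Tr([√ρ, A]† [√ρ, A])` of a matrix `A`
with respect to a positive semidefinite matrix `ρ`, where `√ρ = posSemidefSqrt hρ` is the positive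
semidefinite square root of `ρ`. -/
noncomputable def skewInfo {d : ℕ} {ρ : Matrix (Fin d) (Fin d) ℂ} (hρ : ρ.PosSemidef)
    (A : Matrix (Fin d) (Fin d) ℂ) : ℝ :=
  (1 / 2 : ℝ) *
    (((posSemidefSqrt hρ * A - A * posSemidefSqrt hρ)ᴴ * (posSemidefSqrt hρ * A - A * posSemidefSqrt hρ)).trace).re

section HlawkaAux

variable {E : Type*} [NormedAddCommGroup E] [InnerProductSpace ℂ E]

private lemma hlawka (a b c : E) : ‖a+b‖ + ‖b+c‖ + ‖a+c‖ ≤ ‖a‖ + ‖b‖ + ‖c‖ + ‖a+b+c‖ := by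
  have hq : ‖a+b‖^2 + ‖b+c‖^2 + ‖a+c‖^2 = ‖a‖^2 + ‖b‖^2 + ‖c‖^2 + ‖a+b+c‖^2 := by
    have h1 := @norm_add_sq ℂ _ _ _ _ a b
    have h2 := @norm_add_sq ℂ _ _ _ _ b c
    have h3 := @norm_add_sq ℂ _ _ _ _ a c
    have h4 := @norm_add_sq ℂ _ _ _ _ (a+b) c
    have h5 : RCLike.re (inner ℂ (a+b) c : ℂ)
        = RCLike.re (inner ℂ a c : ℂ) + RCLike.re (inner ℂ b c : ℂ) := by
      rw [inner_add_left, map_add]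
    nlinarith [h1,h2,h3,h4,h5]
  have t1 : ‖a+b‖ ≤ ‖a‖ + ‖b‖ := norm_add_le a b
  have t2 : ‖b+c‖ ≤ ‖b‖ + ‖c‖ := norm_add_le b c
  have t3 : ‖a+c‖ ≤ ‖a‖ + ‖c‖ := norm_add_le a c
  have u1 : ‖a+b‖ ≤ ‖c‖ + ‖a+b+c‖ := by
    calc ‖a+b‖ = ‖(a+b+c) - c‖ := by abel_nf
    _ ≤ ‖a+b+c‖ + ‖c‖ := norm_sub_le _ _
    _ = ‖c‖ + ‖a+b+c‖ := by ring
  have u2 : ‖b+c‖ ≤ ‖a‖ + ‖a+b+c‖ := by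
    calc ‖b+c‖ = ‖(a+b+c) - a‖ := by abel_nf
    _ ≤ ‖a+b+c‖ + ‖a‖ := norm_sub_le _ _
    _ = ‖a‖ + ‖a+b+c‖ := by ring
  have u3 : ‖a+c‖ ≤ ‖b‖ + ‖a+b+c‖ := by
    calc ‖a+c‖ = ‖(a+b+c) - b‖ := by abel_nf
    _ ≤ ‖a+b+c‖ + ‖b‖ := norm_sub_le _ _
    _ = ‖b‖ + ‖a+b+c‖ := by ring
  nlinarith [mul_nonneg (by linarith : (0:ℝ) ≤ ‖a‖+‖b‖-‖a+b‖) (by linarith : (0:ℝ) ≤ ‖c‖+‖a+b+c‖-‖a+b‖),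
    mul_nonneg (by linarith : (0:ℝ) ≤ ‖b‖+‖c‖-‖b+c‖) (by linarith : (0:ℝ) ≤ ‖a‖+‖a+b+c‖-‖b+c‖),
    mul_nonneg (by linarith : (0:ℝ) ≤ ‖a‖+‖c‖-‖a+c‖) (by linarith : (0:ℝ) ≤ ‖b‖+‖a+b+c‖-‖a+c‖),
    norm_nonneg a, norm_nonneg b, norm_nonneg c, norm_nonneg (a+b+c), hq]

private noncomputable def pairSum : List E → ℝ
  | [] => 0
  | x :: L => (L.map (fun c => ‖x + c‖)).sum + pairSum L

private lemma hlawka_sum (a b : E) (M : List E) :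
    (M.map (fun c => ‖a + c‖)).sum + (M.map (fun c => ‖b + c‖)).sum
      + (M.length : ℝ) * ‖a + b‖
    ≤ (M.length : ℝ) * (‖a‖ + ‖b‖) + (M.map norm).sum + (M.map (fun c => ‖a + b + c‖)).sum := by
  induction M with
  | nil => simp
  | cons c M' ihM =>
    simp only [List.map_cons, List.sum_cons, List.length_cons]
    push_cast
    nlinarith [hlawka a b c, ihM]

private lemma hlawka_list : ∀ (m : ℕ) (L : List E), L.length = m →
    pairSum L ≤ ((L.length : ℝ) - 2) * (L.map norm).sum + ‖L.sum‖ := by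
  intro m
  induction m using Nat.strong_induction_on with
  | _ m ih =>
    intro L hL
    match L, hL with
    | [], _ => simp [pairSum]
    | [x], _ => simp [pairSum]; linarith [norm_nonneg x]
    | a :: b :: M, hL =>
      have hL' : M.length + 2 = m := by simpa using hL
      have key := ih (M.length + 1) (by omega) ((a + b) :: M) (by simp)
      have hsum := hlawka_sum a b M
      simp only [pairSum, List.map_cons, List.sum_cons, List.length_cons] at key ⊢
      have e1 : ‖a + b + M.sum‖ = ‖a + (b + M.sum)‖ := by rw [add_assoc]
      push_cast at key ⊢
      nlinarith [key, hsum, e1.ge, e1.le]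

omit [InnerProductSpace ℂ E] in
private lemma pairSum_ofFn : ∀ {N : ℕ} (v : Fin N → E),
    pairSum (List.ofFn v) = ∑ s, ∑ t ∈ Ioi s, ‖v s + v t‖ := by
  intro N
  induction N with
  | zero => intro v; simp [pairSum]
  | succ N ihN =>
    intro v
    rw [List.ofFn_succ]
    simp only [pairSum, List.map_ofFn, List.sum_ofFn, ihN]
    rw [Fin.sum_univ_succ]
    congr 1
    · rw [Fin.sum_Ioi_zero]; rfl
    · refine Finset.sum_congr rfl fun s _ => ?_
      rw [Fin.sum_Ioi_succ]

private lemma hlawka_fin {N : ℕ} (v : Fin N → E) :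
    ∑ s, ∑ t ∈ Ioi s, ‖v s + v t‖ ≤ ((N : ℝ) - 2) * ∑ s, ‖v s‖ + ‖∑ s, v s‖ := by
  have h := hlawka_list (List.ofFn v).length (List.ofFn v) rfl
  rw [pairSum_ofFn] at h
  simpa [List.sum_ofFn, List.map_ofFn, List.length_ofFn, Function.comp] using h

end HlawkaAux

private lemma skewInfo_eq {d : ℕ} {ρ : Matrix (Fin d) (Fin d) ℂ} (hρ : ρ.PosSemidef)
    (A : Matrix (Fin d) (Fin d) ℂ) :
    skewInfo hρ A = (1/2 : ℝ) * ∑ p : Fin d × Fin d,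
      ‖(posSemidefSqrt hρ * A - A * posSemidefSqrt hρ) p.1 p.2‖^2 := by
  set X := posSemidefSqrt hρ * A - A * posSemidefSqrt hρ with hX
  have : ((Xᴴ * X).trace).re = ∑ p : Fin d × Fin d, ‖X p.1 p.2‖^2 := by
    rw [Matrix.trace]
    simp only [Matrix.diag_apply, Matrix.mul_apply, Matrix.conjTranspose_apply]
    rw [Fintype.sum_prod_type_right, Complex.re_sum]
    refine Finset.sum_congr rfl fun b _ => ?_
    rw [Complex.re_sum]
    refine Finset.sum_congr rfl fun a _ => ?_
    simp only [RCLike.star_def, Complex.conj_mul', Complex.ofReal_re]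
    norm_cast
  rw [skewInfo, this]

theorem stmt_4 {d n N : ℕ} (hN : 3 ≤ N)
    (ρ : Matrix (Fin d) (Fin d) ℂ) (hρ : ρ.PosSemidef) (htr : ρ.trace = 1)
    (K : Fin N → Fin n → Matrix (Fin d) (Fin d) ℂ)
    (hK : ∀ s, ∑ i, (K s i)ᴴ * K s i = 1)
    (π : Fin N → Equiv.Perm (Fin n)) :
    ∑ s, Real.sqrt (∑ i, skewInfo hρ (K s i)) ≥
      (1 / ((N : ℝ) - 2)) *
        ((∑ s : Fin N, ∑ t ∈ Finset.Ioi s,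
            Real.sqrt (∑ i, skewInfo hρ (K s (π s i) + K t (π t i))))
          - Real.sqrt (∑ i, skewInfo hρ (∑ s, K s (π s i)))) := by
  classical
  -- the Euclidean vector associated to a family of matrices
  set W : (Fin n → Matrix (Fin d) (Fin d) ℂ) → EuclideanSpace ℂ (Fin n × Fin d × Fin d) :=
    fun B => WithLp.toLp 2 (fun q : Fin n × Fin d × Fin d => (posSemidefSqrt hρ * B q.1 - B q.1 * posSemidefSqrt hρ) q.2.1 q.2.2) with hW
  have hnorm : ∀ B : Fin n → Matrix (Fin d) (Fin d) ℂ,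
      ‖W B‖^2 = ∑ i, ∑ p : Fin d × Fin d,
        ‖(posSemidefSqrt hρ * B i - B i * posSemidefSqrt hρ) p.1 p.2‖^2 := by
    intro B
    rw [EuclideanSpace.norm_eq, Real.sq_sqrt (by positivity)]
    rw [Fintype.sum_prod_type]
  have hsqrt : ∀ B : Fin n → Matrix (Fin d) (Fin d) ℂ,
      Real.sqrt (∑ i, skewInfo hρ (B i)) = Real.sqrt (1/2 : ℝ) * ‖W B‖ := by
    intro B
    have : ∑ i, skewInfo hρ (B i) = (1/2 : ℝ) * ‖W B‖^2 := by
      rw [hnorm, Finset.mul_sum]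
      exact Finset.sum_congr rfl fun i _ => skewInfo_eq hρ (B i)
    rw [this, Real.sqrt_mul (by norm_num), Real.sqrt_sq (norm_nonneg _)]
  set v : Fin N → EuclideanSpace ℂ (Fin n × Fin d × Fin d) :=
    fun s => W (fun i => K s (π s i)) with hv
  -- rewrite the three kinds of terms
  have e1 : ∀ s, Real.sqrt (∑ i, skewInfo hρ (K s i)) = Real.sqrt (1/2 : ℝ) * ‖v s‖ := by
    intro s
    rw [← Equiv.sum_comp (π s) (fun i => skewInfo hρ (K s i))]
    exact hsqrt _
  have e2 : ∀ s t, Real.sqrt (∑ i, skewInfo hρ (K s (π s i) + K t (π t i)))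
      = Real.sqrt (1/2 : ℝ) * ‖v s + v t‖ := by
    intro s t
    rw [hsqrt]
    congr 2
    ext q
    show (posSemidefSqrt hρ * (K s (π s q.1) + K t (π t q.1))
        - (K s (π s q.1) + K t (π t q.1)) * posSemidefSqrt hρ) q.2.1 q.2.2 = _
    rw [PiLp.add_apply]
    simp only [hv, hW, Matrix.mul_add, Matrix.add_mul, Matrix.sub_apply, Matrix.add_apply]
    ring
  have e3 : Real.sqrt (∑ i, skewInfo hρ (∑ s, K s (π s i)))
      = Real.sqrt (1/2 : ℝ) * ‖∑ s, v s‖ := by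
    rw [hsqrt]
    congr 2
    ext q
    show (posSemidefSqrt hρ * (∑ s, K s (π s q.1)) - (∑ s, K s (π s q.1)) * posSemidefSqrt hρ) q.2.1 q.2.2 = _
    rw [WithLp.ofLp_sum, Finset.sum_apply]
    simp only [hv, hW, Matrix.mul_sum, Matrix.sum_mul, Matrix.sub_apply, Matrix.sum_apply]
    rw [Finset.sum_sub_distrib]
  simp only [e1, e2, e3]
  have hfin := hlawka_fin v
  have hc : (0:ℝ) ≤ Real.sqrt (1/2 : ℝ) := Real.sqrt_nonneg _
  have hN2 : (0:ℝ) < (N : ℝ) - 2 := by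
    have : (3:ℝ) ≤ (N:ℝ) := by exact_mod_cast hN
    linarith
  rw [ge_iff_le, one_div, inv_mul_le_iff₀ hN2]
  have hsum1 : ∑ s : Fin N, ∑ t ∈ Ioi s, Real.sqrt (1/2:ℝ) * ‖v s + v t‖
      = Real.sqrt (1/2:ℝ) * ∑ s : Fin N, ∑ t ∈ Ioi s, ‖v s + v t‖ := by
    rw [Finset.mul_sum]
    exact Finset.sum_congr rfl fun s _ => (Finset.mul_sum _ _ _).symm
  have hsum2 : ∑ s : Fin N, Real.sqrt (1/2:ℝ) * ‖v s‖
      = Real.sqrt (1/2:ℝ) * ∑ s : Fin N, ‖v s‖ := (Finset.mul_sum _ _ _).symm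
  rw [hsum1, hsum2]
  nlinarith [mul_le_mul_of_nonneg_left hfin hc]
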